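/- Let s, t ≥ 1 be integers, G a group, σ_1, …, σ_s : G → ℝ_{>0} group homomorphisms into the positive reals, and σ_{s+1}, …, σ_{s+t} : G → ℂ∖{0} group homomorphisms into the nonzero complex numbers; define σ_{s+t+j}(u) = conj(σ_{s+j}(u)) for 1 ≤ j ≤ t. Assume: (i) the functions u ↦ log σ_1(u), …, u ↦ log σ_s(u) are linearly independent over ℝ in the vector space of real-valued functions on G; (ii) for all u ∈ G and all 1 ≤ j ≤ t one has |σ_{s+j}(u)|^2 = (σ_1(u)·…·σ_s(u))^{−1/t}. Then for any subset I ⊆ {1, …, s+2t}: if ∏_{i∈I} σ_i(u) = 1 for all u ∈ G, then either I = ∅ or I = {1, …, s+2t}. -/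

import Mathlib

/-- Let `s, t ≥ 1`, `G` a group, and `σ₁, …, σ_{s+2t} : G → ℂ` (indexed here by
`i ∈ {1, …, s+2t}`) be group homomorphisms such that `σ₁, …, σ_s` take positive real
values, `σ_{s+1}, …, σ_{s+t}` take nonzero values, and `σ_{s+t+j} = conj ∘ σ_{s+j}` for
`1 ≤ j ≤ t`. Assume (i) the functions `u ↦ log σᵢ(u)`, `1 ≤ i ≤ s`, are linearly
independent over `ℝ` in the space of real-valued functions on `G`, and (ii) for all
`u ∈ G` and `1 ≤ j ≤ t`, `|σ_{s+j}(u)|² = (σ₁(u)⋯σ_s(u))^(−1/t)`. Then for any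
`I ⊆ {1, …, s+2t}`: if `∏_{i∈I} σᵢ(u) = 1` for all `u ∈ G`, then `I = ∅` or
`I = {1, …, s+2t}`. -/
theorem stmt5 (s t : ℕ) (hs : 1 ≤ s) (ht : 1 ≤ t)
    (G : Type*) [Group G] (σ : ℕ → G → ℂ)
    (hone : ∀ i ∈ Finset.Icc 1 (s + 2 * t), σ i 1 = 1)
    (hhom : ∀ i ∈ Finset.Icc 1 (s + 2 * t), ∀ u v : G, σ i (u * v) = σ i u * σ i v)
    (hreal : ∀ i ∈ Finset.Icc 1 s, ∀ u : G, ∃ r : ℝ, 0 < r ∧ σ i u = (r : ℂ))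
    (hnz : ∀ j ∈ Finset.Icc 1 t, ∀ u : G, σ (s + j) u ≠ 0)
    (hconj : ∀ j ∈ Finset.Icc 1 t, ∀ u : G,
      σ (s + t + j) u = starRingEnd ℂ (σ (s + j) u))
    (hind : LinearIndependent ℝ
      (fun i : Fin s => (fun u : G => Real.log (σ (i.1 + 1) u).re : G → ℝ)))
    (hlck : ∀ u : G, ∀ j ∈ Finset.Icc 1 t,
      ‖σ (s + j) u‖ ^ 2
        = (∏ k ∈ Finset.Icc 1 s, (σ k u).re) ^ (-(1 : ℝ) / (t : ℝ)))
    (I : Finset ℕ) (hI : I ⊆ Finset.Icc 1 (s + 2 * t))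
    (htriv : ∀ u : G, ∏ i ∈ I, σ i u = 1) :
    I = ∅ ∨ I = Finset.Icc 1 (s + 2 * t) := by
  have ht0 : (0:ℝ) < t := by exact_mod_cast ht
  have ht0' : (t:ℝ) ≠ 0 := ne_of_gt ht0
  have hs0 : 0 < s := hs
  -- positivity of real characters
  have hrepos : ∀ i ∈ Finset.Icc 1 s, ∀ u : G, 0 < (σ i u).re := by
    intro i hi u
    obtain ⟨r, hr, hru⟩ := hreal i hi u
    rw [hru]; simpa using hr
  have habsr : ∀ i ∈ Finset.Icc 1 s, ∀ u : G, ‖σ i u‖ = (σ i u).re := by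
    intro i hi u
    obtain ⟨r, hr, hru⟩ := hreal i hi u
    rw [hru]
    simp [abs_of_pos hr]
  set P : G → ℝ := fun u => ∏ k ∈ Finset.Icc 1 s, (σ k u).re with hPdef
  have hPpos : ∀ u, 0 < P u := fun u => Finset.prod_pos (fun k hk => hrepos k hk u)
  -- abs of complex characters
  have habsc : ∀ i ∈ Finset.Icc (s+1) (s+2*t), ∀ u : G,
      ‖σ i u‖ = (P u) ^ (-(1:ℝ)/(2*t)) := by
    intro i hi u
    rw [Finset.mem_Icc] at hi
    have key : ∀ j ∈ Finset.Icc 1 t,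
        ‖σ (s+j) u‖ = (P u) ^ (-(1:ℝ)/(2*t)) := by
      intro j hj
      have h2 : ‖σ (s+j) u‖ ^ 2 = ((P u) ^ (-(1:ℝ)/(2*t)))^2 := by
        rw [hlck u j hj, ← Real.rpow_natCast ((P u) ^ (-(1:ℝ)/(2*t))) 2,
          ← Real.rpow_mul (hPpos u).le]
        congr 1
        push_cast
        field_simp
      have h3 : ‖σ (s+j) u‖
          = Real.sqrt (‖σ (s+j) u‖ ^ 2) :=
        (Real.sqrt_sq (norm_nonneg _)).symm
      rw [h3, h2, Real.sqrt_sq (Real.rpow_nonneg (hPpos u).le _)]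
    rcases le_or_gt i (s+t) with hle | hlt
    · obtain ⟨j, rfl⟩ : ∃ j, i = s + j := ⟨i - s, by omega⟩
      exact key j (by rw [Finset.mem_Icc]; omega)
    · obtain ⟨j, rfl⟩ : ∃ j, i = s + t + j := ⟨i - s - t, by omega⟩
      have hj : j ∈ Finset.Icc 1 t := by rw [Finset.mem_Icc]; omega
      rw [hconj j hj u, Complex.norm_conj]
      exact key j hj
  -- abs never vanishes
  have habspos : ∀ i ∈ Finset.Icc 1 (s + 2*t), ∀ u : G, 0 < ‖σ i u‖ := by
    intro i hi u
    rw [Finset.mem_Icc] at hi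
    rcases le_or_gt i s with h | h
    · rw [habsr i (Finset.mem_Icc.mpr ⟨hi.1, h⟩) u]
      exact hrepos i (Finset.mem_Icc.mpr ⟨hi.1, h⟩) u
    · rw [habsc i (Finset.mem_Icc.mpr ⟨by omega, hi.2⟩) u]
      exact Real.rpow_pos_of_pos (hPpos u) _
  set a : ℕ := (I ∩ Finset.Icc (s+1) (s+2*t)).card with ha
  -- split I
  have hsplit : I = (I ∩ Finset.Icc 1 s) ∪ (I ∩ Finset.Icc (s+1) (s+2*t)) := by
    ext k
    simp only [Finset.mem_union, Finset.mem_inter, Finset.mem_Icc]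
    constructor
    · intro hk
      have := hI hk
      rw [Finset.mem_Icc] at this
      rcases le_or_gt k s with h | h
      · exact Or.inl ⟨hk, this.1, h⟩
      · exact Or.inr ⟨hk, by omega, this.2⟩
    · rintro (⟨hk, _⟩ | ⟨hk, _⟩) <;> exact hk
  have hdisj : Disjoint (I ∩ Finset.Icc 1 s) (I ∩ Finset.Icc (s+1) (s+2*t)) := by
    rw [Finset.disjoint_left]
    intro k hk1 hk2
    simp only [Finset.mem_inter, Finset.mem_Icc] at hk1 hk2
    omega
  have hlogP : ∀ u : G, Real.log (P u) = ∑ k ∈ Finset.Icc 1 s, Real.log (σ k u).re :=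
    fun u => Real.log_prod (fun k hk => (hrepos k hk u).ne')
  -- the main linear relation
  have hEq : ∀ u : G, ∑ i ∈ I ∩ Finset.Icc 1 s, Real.log (σ i u).re
      + (a : ℝ) * (-(1:ℝ)/(2*t) * Real.log (P u)) = 0 := by
    intro u
    have h1 : ∏ i ∈ I, ‖σ i u‖ = 1 := by
      rw [← Complex.norm_prod, htriv u, norm_one]
    have h3 : ∑ i ∈ I, Real.log (‖σ i u‖) = 0 := by
      rw [← Real.log_prod (fun i hi => (habspos i (hI hi) u).ne'), h1, Real.log_one]
    rw [hsplit, Finset.sum_union hdisj] at h3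
    have h4 : ∑ i ∈ I ∩ Finset.Icc 1 s, Real.log (‖σ i u‖)
        = ∑ i ∈ I ∩ Finset.Icc 1 s, Real.log (σ i u).re :=
      Finset.sum_congr rfl (fun i hi => by
        rw [habsr i (Finset.mem_of_mem_inter_right hi) u])
    have h5 : ∑ i ∈ I ∩ Finset.Icc (s+1) (s+2*t), Real.log (‖σ i u‖)
        = (a : ℝ) * (-(1:ℝ)/(2*t) * Real.log (P u)) := by
      rw [Finset.sum_congr rfl (fun i hi =>
        by rw [habsc i (Finset.mem_of_mem_inter_right hi) u,
          Real.log_rpow (hPpos u)]), Finset.sum_const, nsmul_eq_mul]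
    rw [h4, h5] at h3
    exact h3
  -- reindexing lemma : Fin s ↔ Icc 1 s
  have hconv : ∀ f : ℕ → ℝ, ∑ i : Fin s, f (i.1+1) = ∑ k ∈ Finset.Icc 1 s, f k := by
    intro f
    rw [Fin.sum_univ_eq_sum_range (fun i => f (i+1)) s, ← Finset.Ico_add_one_right_eq_Icc,
      Finset.sum_Ico_eq_sum_range]
    simp [add_comm]
  -- linear independence gives coefficient vanishing
  have g0 : ∀ i : Fin s,
      ((if (i.1+1) ∈ I then (1:ℝ) else 0) - (a:ℝ)/(2*t)) = 0 := by
    have hind' := Fintype.linearIndependent_iff.mp hind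
    refine hind' (fun i => (if (i.1+1) ∈ I then (1:ℝ) else 0) - (a:ℝ)/(2*t)) ?_
    funext u
    simp only [Finset.sum_apply, Pi.smul_apply, smul_eq_mul, Pi.zero_apply]
    rw [hconv (fun k => ((if k ∈ I then (1:ℝ) else 0) - (a:ℝ)/(2*t)) * Real.log (σ k u).re)]
    have e1 : ∑ k ∈ Finset.Icc 1 s,
        ((if k ∈ I then (1:ℝ) else 0) - (a:ℝ)/(2*t)) * Real.log (σ k u).re
        = (∑ k ∈ Finset.Icc 1 s, (if k ∈ I then Real.log (σ k u).re else 0))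
          - (a:ℝ)/(2*t) * ∑ k ∈ Finset.Icc 1 s, Real.log (σ k u).re := by
      rw [Finset.mul_sum, ← Finset.sum_sub_distrib]
      refine Finset.sum_congr rfl (fun k _ => by
        by_cases hk : k ∈ I <;> simp [hk] <;> ring)
    have e2 : ∑ k ∈ Finset.Icc 1 s, (if k ∈ I then Real.log (σ k u).re else 0)
        = ∑ i ∈ I ∩ Finset.Icc 1 s, Real.log (σ i u).re := by
      rw [← Finset.sum_filter, Finset.filter_mem_eq_inter, Finset.inter_comm]
    rw [e1, e2, ← hlogP u]
    have := hEq u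
    have h2t : (2:ℝ)*t ≠ 0 := by positivity
    field_simp at this ⊢
    linarith
  by_cases h1I : 1 ∈ I
  · right
    have hca : (a:ℝ)/(2*(t:ℝ)) = 1 := by
      have := g0 ⟨0, hs0⟩
      simp only [h1I, if_pos] at this
      simpa using by linarith [this]
    have haeq : a = 2*t := by
      have : (a:ℝ) = 2*t := by
        field_simp at hca
        linarith
      exact_mod_cast this
    have hsub1 : Finset.Icc 1 s ⊆ I := by
      intro k hk
      rw [Finset.mem_Icc] at hk
      have hg := g0 ⟨k-1, by omega⟩
      have hk1 : k - 1 + 1 = k := by omega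
      rw [hk1] at hg
      by_contra hkI
      simp only [hkI, if_neg, not_false_iff] at hg
      rw [hca] at hg
      norm_num at hg
    have hsub2 : Finset.Icc (s+1) (s+2*t) ⊆ I := by
      have hcard : (Finset.Icc (s+1) (s+2*t)).card = 2*t := by
        rw [Nat.card_Icc]; omega
      have heq : I ∩ Finset.Icc (s+1) (s+2*t) = Finset.Icc (s+1) (s+2*t) :=
        Finset.eq_of_subset_of_card_le Finset.inter_subset_right
          (by rw [hcard, ← ha, haeq])
      intro k hk
      rw [← heq] at hk
      exact (Finset.mem_inter.mp hk).1
    refine Finset.Subset.antisymm hI ?_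
    intro k hk
    rw [Finset.mem_Icc] at hk
    rcases le_or_gt k s with h | h
    · exact hsub1 (Finset.mem_Icc.mpr ⟨hk.1, h⟩)
    · exact hsub2 (Finset.mem_Icc.mpr ⟨by omega, hk.2⟩)
  · left
    have hca : (a:ℝ) = 0 := by
      have := g0 ⟨0, hs0⟩
      simp only [h1I, if_neg, not_false_iff] at this
      have h2t : (2:ℝ)*t ≠ 0 := by positivity
      field_simp at this
      linarith
    have ha0 : a = 0 := by exact_mod_cast hca
    have hempty : I ∩ Finset.Icc (s+1) (s+2*t) = ∅ := Finset.card_eq_zero.mp ha0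
    have hnotin : ∀ k ∈ Finset.Icc 1 s, k ∉ I := by
      intro k hk hkI
      rw [Finset.mem_Icc] at hk
      have hg := g0 ⟨k-1, by omega⟩
      have hk1 : k - 1 + 1 = k := by omega
      rw [hk1] at hg
      simp only [hkI, if_pos] at hg
      rw [hca] at hg
      norm_num at hg
    ext k
    simp only [Finset.notMem_empty, iff_false]
    intro hkI
    have hk := hI hkI
    rw [Finset.mem_Icc] at hk
    rcases le_or_gt k s with h | h
    · exact hnotin k (Finset.mem_Icc.mpr ⟨hk.1, h⟩) hkI
    · have : k ∈ I ∩ Finset.Icc (s+1) (s+2*t) :=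
        Finset.mem_inter.mpr ⟨hkI, Finset.mem_Icc.mpr ⟨by omega, hk.2⟩⟩
      rw [hempty] at this
      exact Finset.notMem_empty k this
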